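/- Let q′ ≥ 1, let y₁,…,y_{q′} : [0,∞) → ℝ be differentiable functions such that yᵢ(t) ≤ Mᵢ for all t ≥ 0 and each i (with constants Mᵢ ∈ ℝ), and let α₁,…,α_{q′} > 0 and γ > 0. Suppose that for every t ≥ 0 at which min{y₁(t),…,y_{q′}(t)} < 0 one has ∑_{i=1}^{q′} αᵢ·yᵢ′(t) ≥ γ. Then for every T′ ≥ 0 there exists a finite time T ≥ T′ such that min{y₁(T),…,y_{q′}(T)} ≥ 0. -/

import Mathlib

/-- Scalar core of the composite finite-time control barrier function theorem:
if the bounded differentiable functions `y₁,…,y_{q'}` satisfy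
`∑ αᵢ·yᵢ'(t) ≥ γ` whenever `min{y₁(t),…,y_{q'}(t)} < 0`, then after any time `T'`
there is a finite time `T ≥ T'` at which `min{y₁(T),…,y_{q'}(T)} ≥ 0`. -/
theorem composite_fcbf_scalar_core (q' : ℕ) (hq' : 1 ≤ q')
    (y y' : Fin q' → ℝ → ℝ)
    (hderiv : ∀ i, ∀ t ≥ (0:ℝ), HasDerivAt (y i) (y' i t) t)
    (M : Fin q' → ℝ) (hbdd : ∀ i, ∀ t ≥ (0:ℝ), y i t ≤ M i)
    (α : Fin q' → ℝ) (hα : ∀ i, 0 < α i)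
    (γ : ℝ) (hγ : 0 < γ)
    (hineq : ∀ t ≥ (0:ℝ), (⨅ i, y i t) < 0 → γ ≤ ∑ i, α i * y' i t) :
    ∀ T' ≥ (0:ℝ), ∃ T ≥ T', 0 ≤ ⨅ i, y i T := by
  intro T' hT'
  by_contra hcon
  push_neg at hcon
  -- hcon : ∀ T ≥ T', ⨅ i, y i T < 0
  set V : ℝ → ℝ := fun t => ∑ i, α i * y i t - γ * t with hV
  have hVd : ∀ t ≥ (0:ℝ), HasDerivAt V (∑ i, α i * y' i t - γ) t := by
    intro t ht
    have h1 : HasDerivAt (fun t => ∑ i, α i * y i t) (∑ i, α i * y' i t) t :=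
      HasDerivAt.fun_sum fun i _ => (hderiv i t ht).const_mul (α i)
    have h2 := h1.sub ((hasDerivAt_id t).const_mul γ)
    rw [mul_one] at h2
    exact h2
  have hmono : MonotoneOn V (Set.Ici T') := by
    apply monotoneOn_of_deriv_nonneg (convex_Ici T')
    · exact fun t ht => ((hVd t (le_trans hT' ht)).continuousAt).continuousWithinAt
    · intro t ht
      rw [interior_Ici] at ht
      exact (hVd t (le_trans hT' ht.le)).differentiableAt.differentiableWithinAt
    · intro t ht
      rw [interior_Ici] at ht
      rw [(hVd t (le_trans hT' ht.le)).deriv]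
      have := hineq t (le_trans hT' ht.le) (hcon t ht.le)
      linarith
  set S : ℝ := ∑ i, α i * M i with hS
  have hsum_le : ∀ t ≥ (0:ℝ), ∑ i, α i * y i t ≤ S := by
    intro t ht
    exact Finset.sum_le_sum fun i _ =>
      mul_le_mul_of_nonneg_left (hbdd i t ht) (hα i).le
  have hST' : ∑ i, α i * y i T' ≤ S := hsum_le T' hT'
  set T : ℝ := T' + (S - ∑ i, α i * y i T') / γ + 1 with hT
  have hTge : T' ≤ T := by
    have h0 : 0 ≤ (S - ∑ i, α i * y i T') / γ := div_nonneg (by linarith) hγ.le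
    rw [hT]; linarith
  have hVle : V T' ≤ V T := hmono (Set.self_mem_Ici) hTge hTge
  have hTle : ∑ i, α i * y i T ≤ S := hsum_le T (le_trans hT' hTge)
  have key : γ * (T - T') ≤ S - ∑ i, α i * y i T' := by
    simp only [hV] at hVle
    linarith
  have : γ * (T - T') = (S - ∑ i, α i * y i T') + γ := by
    rw [hT]
    field_simp
    ring
  linarith
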